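/- Let R ≥ 1 and I ⊂ ℝ an interval of length one. Let ρ : I → (0,∞) be integrable with ρ(λx+(1-λ)y) ≤ R[λρ(x)+(1-λ)ρ(y)] for all x,y ∈ I, 0 < λ < 1. Then for any absolutely continuous g : closure(I) → [0,∞) vanishing at both endpoints of I, ∫_I g ρ ≤ (R/2) ∫_I |g'| ρ. -/

import Mathlib

open Set MeasureTheory

theorem cheeger_type_inequality (R a : ℝ) (hR : 1 ≤ R) (ρ : ℝ → ℝ)
    (hpos : ∀ x ∈ Icc a (a + 1), 0 < ρ x)
    (hint : IntegrableOn ρ (Icc a (a + 1)))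
    (hconv : ∀ x ∈ Icc a (a + 1), ∀ y ∈ Icc a (a + 1), ∀ l : ℝ, 0 < l → l < 1 →
      ρ (l * x + (1 - l) * y) ≤ R * (l * ρ x + (1 - l) * ρ y))
    (g g' : ℝ → ℝ)
    (hg0 : ∀ x ∈ Icc a (a + 1), 0 ≤ g x)
    (hg'int : IntegrableOn g' (Icc a (a + 1)))
    (hgrep : ∀ x ∈ Icc a (a + 1), g x = ∫ t in a..x, g' t)
    (hga : g a = 0) (hgb : g (a + 1) = 0) :
    ∫ x in a..(a + 1), g x * ρ x ≤ R / 2 * ∫ x in a..(a + 1), |g' x| * ρ x := by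
  set b : ℝ := a + 1 with hb
  have hab : a ≤ b := by rw [hb]; linarith
  have hR0 : (0:ℝ) < R := by linarith
  have hsub : Ioc a b ⊆ Icc a b := Ioc_subset_Icc_self
  have hρInt : IntegrableOn ρ (Ioc a b) := hint.mono_set hsub
  have hg'Int : IntegrableOn g' (Ioc a b) := hg'int.mono_set hsub
  have hρasm := hρInt.aestronglyMeasurable
  have hg'asm := hg'Int.aestronglyMeasurable
  -- interval integrability of ρ on subintervals
  have hiρ : ∀ s ∈ Icc a b, ∀ t ∈ Icc a b, IntervalIntegrable ρ volume s t := by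
    intro s hs t ht
    have hsu : uIcc s t ⊆ Icc a b := by
      have : uIcc s t ⊆ uIcc a b :=
        uIcc_subset_uIcc (by rwa [uIcc_of_le hab]) (by rwa [uIcc_of_le hab])
      rwa [uIcc_of_le hab] at this
    exact (hint.mono_set hsu).intervalIntegrable
  -- KEY inequality
  have key : ∀ s ∈ Icc a b, ∀ t ∈ Icc a b, s ≤ t →
      (∫ x in s..t, ρ x) ≤ R / 2 * (ρ s + ρ t) := by
    intro s hs t ht hst
    rcases eq_or_lt_of_le hst with rfl | hlt
    · rw [intervalIntegral.integral_same]
      nlinarith [hpos s hs]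
    · have hts : 0 < t - s := by linarith
      have hts1 : t - s ≤ 1 := by
        rcases hs with ⟨hs1, hs2⟩; rcases ht with ⟨ht1, ht2⟩; rw [hb] at ht2; linarith
      have h0 : t - s ≠ 0 := ne_of_gt hts
      have hmono : ∀ x ∈ Icc s t, ρ x ≤ R * ((t - x) * ρ s + (x - s) * ρ t) / (t - s) := by
        intro x hx
        have hρs := hpos s hs
        have hρt := hpos t ht
        rcases lt_or_eq_of_le hx.1 with hx1 | hx1
        · rcases lt_or_eq_of_le hx.2 with hx2 | hx2
          · set l : ℝ := (t - x) / (t - s) with hl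
            have hl0 : 0 < l := by apply div_pos <;> linarith
            have hl1 : l < 1 := by rw [hl, div_lt_one hts]; linarith
            have hxe : l * s + (1 - l) * t = x := by
              rw [hl]; field_simp; try ring
            have := hconv s hs t ht l hl0 hl1
            rw [hxe] at this
            refine this.trans (le_of_eq ?_)
            rw [hl]; field_simp; try ring
          · have he : R * ((t - x) * ρ s + (x - s) * ρ t) / (t - s) = R * ρ t := by
              rw [hx2]; field_simp; try ring
            rw [he, hx2]; nlinarith
        · have he : R * ((t - x) * ρ s + (x - s) * ρ t) / (t - s) = R * ρ s := by
            rw [← hx1]; field_simp; try ring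
          rw [he, ← hx1]; nlinarith
      have h1 : IntervalIntegrable ρ volume s t := hiρ s hs t ht
      have h2 : IntervalIntegrable
          (fun x => R * ((t - x) * ρ s + (x - s) * ρ t) / (t - s)) volume s t := by
        apply Continuous.intervalIntegrable
        fun_prop
      calc ∫ x in s..t, ρ x
          ≤ ∫ x in s..t, R * ((t - x) * ρ s + (x - s) * ρ t) / (t - s) :=
            intervalIntegral.integral_mono_on hst h1 h2 hmono
        _ = R * (t - s) * (ρ s + ρ t) / 2 := by
            have e1 : (fun x => R * ((t - x) * ρ s + (x - s) * ρ t) / (t - s))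
                = fun x => (R * (t * ρ s - s * ρ t) / (t - s))
                    + (R * (ρ t - ρ s) / (t - s)) * x := by
              funext x; field_simp; ring
            rw [e1]
            have hid : IntervalIntegrable (fun x : ℝ => x) volume s t :=
              (continuous_id.intervalIntegrable s t)
            rw [intervalIntegral.integral_add (intervalIntegrable_const)
              (hid.const_mul _),
              intervalIntegral.integral_const,
              intervalIntegral.integral_const_mul, integral_id]
            simp only [smul_eq_mul]; field_simp
            ring
        _ ≤ R / 2 * (ρ s + ρ t) := by
            have hsum : 0 ≤ ρ s + ρ t := by nlinarith [hpos s hs, hpos t ht]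
            have h4 : R * (t - s) * (ρ s + ρ t) ≤ R * 1 * (ρ s + ρ t) := by
              apply mul_le_mul_of_nonneg_right _ hsum
              apply mul_le_mul_of_nonneg_left hts1 hR0.le
            linarith
  -- the measure
  set σ : Measure ℝ := volume.restrict (Ioc a b) with hσ
  -- Fubini identity
  set F : ℝ → ℝ := fun t => ∫ x in t..b, ρ x with hF
  have mainId : ∫ x in Ioc a b, g x * ρ x = ∫ t in Ioc a b, g' t * F t := by
    set f : ℝ → ℝ → ℝ := fun x t => (Ici t).indicator ρ x * g' t with hf
    have hS : MeasurableSet {z : ℝ × ℝ | z.2 ≤ z.1} :=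
      measurableSet_le measurable_snd measurable_fst
    have hfint : Integrable (Function.uncurry f) (σ.prod σ) := by
      have hdom : Integrable (fun z : ℝ × ℝ => ‖ρ z.1‖ * ‖g' z.2‖) (σ.prod σ) :=
        hρInt.norm.mul_prod hg'Int.norm
      have hasm : AEStronglyMeasurable (Function.uncurry f) (σ.prod σ) := by
        have he : Function.uncurry f = fun z : ℝ × ℝ =>
            ({p : ℝ × ℝ | p.2 ≤ p.1}.indicator (fun p => ρ p.1) z) * g' z.2 := by
          funext z
          simp only [Function.uncurry, hf, Set.indicator_apply, Set.mem_Ici, Set.mem_setOf_eq]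
        rw [he]
        exact ((hρasm.comp_fst.indicator hS).mul hg'asm.comp_snd)
      refine hdom.mono' hasm (Filter.Eventually.of_forall ?_)
      intro z
      simp only [Function.uncurry, hf, norm_mul]
      gcongr
      exact norm_indicator_le_norm_self ρ z.1
    have swap := MeasureTheory.integral_integral_swap hfint
    have hL : ∀ x ∈ Ioc a b, (∫ t, f x t ∂σ) = g x * ρ x := by
      intro x hx
      have hx' : x ∈ Icc a b := hsub hx
      have e1 : (fun t => f x t) = fun t => ρ x * (Iic x).indicator g' t := by
        funext t
        simp only [hf, Set.indicator_apply, Set.mem_Ici, Set.mem_Iic]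
        by_cases h : t ≤ x <;> simp [h, mul_comm]
      rw [e1, MeasureTheory.integral_const_mul, hσ,
        MeasureTheory.setIntegral_indicator measurableSet_Iic]
      have e2 : Ioc a b ∩ Iic x = Ioc a x := by
        rw [Set.Ioc_inter_Iic, min_eq_right hx.2]
      rw [e2, ← intervalIntegral.integral_of_le hx'.1, ← hgrep x hx', mul_comm]
    have hRt : ∀ t ∈ Ioc a b, (∫ x, f x t ∂σ) = g' t * F t := by
      intro t ht
      have e1 : (∫ x, f x t ∂σ) = (∫ x, (Ici t).indicator ρ x ∂σ) * g' t := by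
        simp only [hf]
        rw [MeasureTheory.integral_mul_const]
      rw [e1, hσ, MeasureTheory.setIntegral_indicator measurableSet_Ici]
      have e2 : Ioc a b ∩ Ici t = Icc t b := by
        ext x
        simp only [Set.mem_inter_iff, Set.mem_Ioc, Set.mem_Ici, Set.mem_Icc]
        exact ⟨fun h => ⟨h.2, h.1.2⟩, fun h => ⟨⟨lt_of_lt_of_le ht.1 h.1, h.2⟩, h.1⟩⟩
      rw [e2, MeasureTheory.integral_Icc_eq_integral_Ioc,
        ← intervalIntegral.integral_of_le ht.2, mul_comm]
    calc ∫ x in Ioc a b, g x * ρ x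
        = ∫ x, (∫ t, f x t ∂σ) ∂σ :=
          (MeasureTheory.setIntegral_congr_fun measurableSet_Ioc hL).symm
      _ = ∫ t, (∫ x, f x t ∂σ) ∂σ := swap
      _ = ∫ t in Ioc a b, g' t * F t :=
          MeasureTheory.setIntegral_congr_fun measurableSet_Ioc hRt
  -- properties of F
  have hFcont : ContinuousOn F (Icc a b) := by
    have h' : IntegrableOn ρ (uIcc a b) := by rwa [uIcc_of_le hab]
    have := intervalIntegral.continuousOn_primitive_interval_left h'
    rwa [uIcc_of_le hab] at this
  have hFasm : AEStronglyMeasurable F σ :=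
    (hFcont.aestronglyMeasurable measurableSet_Icc).mono_measure
      (Measure.restrict_mono hsub le_rfl)
  set T : ℝ := ∫ x in a..b, ρ x with hT
  have hFsub : ∀ s ∈ Icc a b, ∀ t ∈ Icc a b, s ≤ t → F s - F t = ∫ x in s..t, ρ x := by
    intro s hs t ht hst
    have h1 : IntervalIntegrable ρ volume s t := hiρ s hs t ht
    have h2 : IntervalIntegrable ρ volume t b := hiρ t ht b ⟨hab, le_rfl⟩
    have := intervalIntegral.integral_add_adjacent_intervals h1 h2
    simp only [hF]
    linarith [this]
  have hF0 : ∀ t ∈ Icc a b, 0 ≤ F t := by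
    intro t ht
    apply intervalIntegral.integral_nonneg ht.2
    intro u hu
    exact (hpos u ⟨le_trans ht.1 hu.1, hu.2⟩).le
  have hFT : ∀ t ∈ Icc a b, F t ≤ T := by
    intro t ht
    have h1 := hFsub a ⟨le_rfl, hab⟩ t ht ht.1
    have h2 : 0 ≤ ∫ x in a..t, ρ x := by
      apply intervalIntegral.integral_nonneg ht.1
      intro u hu
      exact (hpos u ⟨hu.1, le_trans hu.2 ht.2⟩).le
    have hFa : F a = T := rfl
    linarith
  have hg'0 : ∫ t in a..b, g' t = 0 := by
    rw [← hgrep b ⟨hab, le_rfl⟩]; exact hgb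
  -- bound on ρ
  set M : ℝ := R * max (ρ a) (ρ b) with hM
  have hMpos : 0 < M := by
    have := hpos a ⟨le_rfl, hab⟩
    have h2 := le_max_left (ρ a) (ρ b)
    nlinarith
  have hMb : ∀ x ∈ Icc a b, ρ x ≤ M := by
    intro x hx
    rcases lt_or_eq_of_le hx.1 with h1 | h1
    swap
    · have h2 := le_max_left (ρ a) (ρ b)
      rw [← h1]; nlinarith [hpos a ⟨le_rfl, hab⟩]
    rcases lt_or_eq_of_le hx.2 with h2 | h2
    swap
    · have h3 := le_max_right (ρ a) (ρ b)
      rw [h2]; nlinarith [hpos b ⟨hab, le_rfl⟩]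
    · set l : ℝ := b - x with hl
      have hl0 : 0 < l := by rw [hl]; linarith
      have hl1 : l < 1 := by rw [hl, hb]; linarith
      have hxe : l * a + (1 - l) * b = x := by rw [hl, hb]; ring
      have := hconv a ⟨le_rfl, hab⟩ b ⟨hab, le_rfl⟩ l hl0 hl1
      rw [hxe] at this
      refine this.trans ?_
      have ha' := le_max_left (ρ a) (ρ b)
      have hb' := le_max_right (ρ a) (ρ b)
      rw [hM]
      have e1 : l * ρ a ≤ l * max (ρ a) (ρ b) := mul_le_mul_of_nonneg_left ha' hl0.le
      have e2 : (1 - l) * ρ b ≤ (1 - l) * max (ρ a) (ρ b) :=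
        mul_le_mul_of_nonneg_left hb' (by linarith)
      have e3 : l * ρ a + (1 - l) * ρ b ≤ max (ρ a) (ρ b) := by linarith
      have := mul_le_mul_of_nonneg_left e3 hR0.le
      linarith
  -- choice of the constant c
  set ψ : ℝ → ℝ := fun t => T - 2 * F t with hψ
  set E : Set ℝ := (fun t => ψ t + R * ρ t) '' Icc a b with hE
  have hbdd : BddBelow E := by
    refine ⟨-T, ?_⟩
    rintro y ⟨s, hs, rfl⟩
    have := hFT s hs
    have := hpos s hs
    simp only [hψ]
    nlinarith
  have hne : E.Nonempty := ⟨_, ⟨a, ⟨le_rfl, hab⟩, rfl⟩⟩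
  set c : ℝ := sInf E with hc
  have hc1 : ∀ t ∈ Icc a b, c ≤ ψ t + R * ρ t := fun t ht => csInf_le hbdd ⟨t, ht, rfl⟩
  have hc2 : ∀ t ∈ Icc a b, ψ t - R * ρ t ≤ c := by
    intro t ht
    apply le_csInf hne
    rintro y ⟨s, hs, rfl⟩
    rcases le_total s t with h | h
    · have hk := key s hs t ht h
      have hd := hFsub s hs t ht h
      simp only [hψ]
      linarith
    · have hd := hFsub t ht s hs h
      have hnn : 0 ≤ ∫ x in t..s, ρ x := by
        apply intervalIntegral.integral_nonneg h
        intro u hu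
        exact (hpos u ⟨le_trans ht.1 hu.1, le_trans hu.2 hs.2⟩).le
      have hρt := hpos t ht
      have hρs := hpos s hs
      simp only [hψ]
      nlinarith
  set H : ℝ → ℝ := fun t => c - ψ t with hH
  have hHb : ∀ t ∈ Icc a b, |H t| ≤ R * ρ t := by
    intro t ht
    rw [abs_le]
    constructor
    · have := hc2 t ht; simp only [hH]; linarith
    · have := hc1 t ht; simp only [hH]; linarith
  -- integrability facts
  have hFG'int : Integrable (fun t => g' t * F t) σ := by
    refine (hg'Int.norm.const_mul |T|).mono' (hg'asm.mul hFasm) ?_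
    filter_upwards [ae_restrict_mem measurableSet_Ioc] with t ht
    have ht' := hsub ht
    rw [norm_mul, mul_comm]
    gcongr
    rw [Real.norm_eq_abs, abs_le]
    exact ⟨by linarith [hF0 t ht', abs_nonneg T], le_trans (hFT t ht') (le_abs_self T)⟩
  have hG'Hint : Integrable (fun t => g' t * H t) σ := by
    have he : (fun t => g' t * H t) = fun t => (c - T) * g' t + 2 * (g' t * F t) := by
      funext t; simp only [hH, hψ]; ring
    rw [he]
    exact (hg'Int.const_mul (c - T)).add (hFG'int.const_mul 2)
  have hAbsInt : Integrable (fun t => |g' t| * ρ t) σ := by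
    have hax : (fun t => |g' t| * ρ t) = fun t => ‖g' t‖ * ρ t := by
      funext t; rw [Real.norm_eq_abs]
    rw [hax]
    refine (hg'Int.norm.const_mul M).mono' (hg'asm.norm.mul hρasm) ?_
    filter_upwards [ae_restrict_mem measurableSet_Ioc] with t ht
    have ht' := hsub ht
    rw [norm_mul, mul_comm, norm_norm]
    refine mul_le_mul_of_nonneg_right ?_ (norm_nonneg _)
    rw [Real.norm_eq_abs, abs_le]
    exact ⟨by linarith [hpos t ht', hMpos], hMb t ht'⟩
  -- the main computation
  have hg'0' : ∫ t in Ioc a b, g' t = 0 := by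
    rw [← intervalIntegral.integral_of_le hab]; exact hg'0
  have step1 : (2:ℝ) * ∫ x in Ioc a b, g x * ρ x = ∫ t in Ioc a b, g' t * H t := by
    have he : (fun t => g' t * H t) = fun t => (c - T) * g' t + 2 * (g' t * F t) := by
      funext t; simp only [hH, hψ]; ring
    have : ∫ t in Ioc a b, g' t * H t
        = (c - T) * (∫ t in Ioc a b, g' t) + 2 * ∫ t in Ioc a b, g' t * F t := by
      rw [he]
      rw [MeasureTheory.integral_add (hg'Int.const_mul (c - T)) (hFG'int.const_mul 2)]
      rw [MeasureTheory.integral_const_mul, MeasureTheory.integral_const_mul]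
    rw [this, hg'0', mainId]
    ring
  have step2 : ∫ t in Ioc a b, g' t * H t ≤ ∫ t in Ioc a b, |g' t| * (R * ρ t) := by
    have habs : Integrable (fun t => |g' t * H t|) σ := hG'Hint.abs
    have hrhs : Integrable (fun t => |g' t| * (R * ρ t)) σ := by
      have he : (fun t => |g' t| * (R * ρ t)) = fun t => R * (|g' t| * ρ t) := by
        funext t; ring
      rw [he]
      exact hAbsInt.const_mul R
    calc ∫ t in Ioc a b, g' t * H t
        ≤ |∫ t in Ioc a b, g' t * H t| := le_abs_self _
      _ ≤ ∫ t in Ioc a b, |g' t * H t| := by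
          rw [← Real.norm_eq_abs]
          refine (norm_integral_le_integral_norm _).trans_eq ?_
          simp only [Real.norm_eq_abs]
      _ ≤ ∫ t in Ioc a b, |g' t| * (R * ρ t) := by
          refine integral_mono_ae habs hrhs ?_
          filter_upwards [ae_restrict_mem measurableSet_Ioc] with t ht
          rw [abs_mul]
          exact mul_le_mul_of_nonneg_left (hHb t (hsub ht)) (abs_nonneg _)
  have step3 : ∫ t in Ioc a b, |g' t| * (R * ρ t) = R * ∫ t in Ioc a b, |g' t| * ρ t := by
    have he : (fun t => |g' t| * (R * ρ t)) = fun t => R * (|g' t| * ρ t) := by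
      funext t; ring
    rw [he, MeasureTheory.integral_const_mul]
  rw [intervalIntegral.integral_of_le hab, intervalIntegral.integral_of_le hab]
  linarith [step1, step2, step3]
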